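/- Under the setting of the projected differential Riccati equation (A, S ∈ ℝ^{n×n} with S symmetric positive semidefinite, X₀ = Z Zᵀ, Q = C Cᵀ, V_k with orthonormal columns, H_k = V_kᵀ A V_k, S_k = V_kᵀ S V_k, Y_k the solution of Ẏ_k = H_k Y_k + Y_k H_kᵀ + (V_kᵀC)(V_kᵀC)ᵀ − Y_k S_k Y_k with Y_k(0) = (V_kᵀZ)(V_kᵀZ)ᵀ, and X_k(t) = V_k Y_k(t) V_kᵀ), the numerical solution satisfies max_{s ∈ [0,t]} ‖X_k(s)‖ ≤ max{1, e^{2tμ(A)}} ‖X₀‖ + t max{1, φ₁(2tμ(A))} ‖Q‖. -/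

import Mathlib

open Matrix Set
open scoped Matrix.Norms.L2Operator

noncomputable section

/-- The logarithmic norm `μ(A)`: the maximum of the real parts of the field of values
`F(A) = {x* A x : ‖x‖ = 1}` of `A`, viewed as a complex matrix. -/
def logNorm {n : ℕ} (A : Matrix (Fin n) (Fin n) ℝ) : ℝ :=
  sSup {r : ℝ | ∃ x : EuclideanSpace ℂ (Fin n), ‖x‖ = 1 ∧
    r = (dotProduct (star (x : Fin n → ℂ)) ((A.map Complex.ofReal).mulVec x)).re}

/-- The function `φ₁(z) = (e^z - 1)/z = ∑_{ℓ≥0} z^ℓ/(ℓ+1)!`. -/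
def phi1 (z : ℝ) : ℝ := ∑' k : ℕ, z ^ k / (Nat.factorial (k + 1) : ℝ)

/-- Matrix exponential. -/
def mexp {n : ℕ} (A : Matrix (Fin n) (Fin n) ℝ) : Matrix (Fin n) (Fin n) ℝ :=
  NormedSpace.exp A

/-- The block Krylov subspace `K_k(A,B) = span{B, AB, …, A^{k-1}B}` (the span of
the columns of the matrices `A^i B`, `i < k`). -/
def blockKrylov {n : ℕ} {ι : Type*} (A : Matrix (Fin n) (Fin n) ℝ) (B : Matrix (Fin n) ι ℝ)
    (k : ℕ) : Submodule ℝ (Fin n → ℝ) :=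
  Submodule.span ℝ {v | ∃ i < k, ∃ j, v = ((A ^ i * B)ᵀ) j}

/-- The column space of a matrix. -/
def colSpace {n m : ℕ} (V : Matrix (Fin n) (Fin m) ℝ) : Submodule ℝ (Fin n → ℝ) :=
  Submodule.span ℝ (Set.range Vᵀ)


variable {n m a b k : ℕ}


lemma inner_eq_dot (x y : EuclideanSpace ℝ (Fin k)) :
    (inner ℝ x y : ℝ) = (x : Fin k → ℝ) ⬝ᵥ (y : Fin k → ℝ) := by
  simp [PiLp.inner_apply, RCLike.inner_apply, dotProduct, mul_comm]

lemma norm_sq_eq_dot (x : EuclideanSpace ℝ (Fin k)) :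
    ‖x‖ ^ 2 = (x : Fin k → ℝ) ⬝ᵥ (x : Fin k → ℝ) := by
  rw [← inner_eq_dot]; exact (real_inner_self_eq_norm_sq x).symm

lemma dot_self_nonneg (u : Fin k → ℝ) : 0 ≤ u ⬝ᵥ u := by
  apply Finset.sum_nonneg; intro i _; exact mul_self_nonneg _

lemma dotProduct_mulVec_le_opNorm (M : Matrix (Fin k) (Fin k) ℝ) (u : Fin k → ℝ) :
    u ⬝ᵥ (M *ᵥ u) ≤ ‖M‖ * (u ⬝ᵥ u) := by
  set x : EuclideanSpace ℝ (Fin k) := (WithLp.equiv 2 _).symm u with hx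
  have h1 : u ⬝ᵥ (M *ᵥ u) = (inner ℝ x ((WithLp.equiv 2 _).symm (M *ᵥ u)) : ℝ) := by
    rw [inner_eq_dot]; rfl
  have h2 : (inner ℝ x ((WithLp.equiv 2 _).symm (M *ᵥ u)) : ℝ)
      ≤ ‖x‖ * ‖((WithLp.equiv 2 _).symm (M *ᵥ u) : EuclideanSpace ℝ (Fin k))‖ :=
    real_inner_le_norm _ _
  have h3 : ‖((WithLp.equiv 2 _).symm (M *ᵥ u) : EuclideanSpace ℝ (Fin k))‖ ≤ ‖M‖ * ‖x‖ :=
    M.l2_opNorm_mulVec x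
  have h4 : ‖x‖ ^ 2 = u ⬝ᵥ u := norm_sq_eq_dot x
  calc u ⬝ᵥ (M *ᵥ u) ≤ ‖x‖ * (‖M‖ * ‖x‖) := h1 ▸ le_trans h2 (by
        have := norm_nonneg x
        exact mul_le_mul_of_nonneg_left h3 this)
    _ = ‖M‖ * (u ⬝ᵥ u) := by rw [← h4]; ring

lemma abs_dotProduct_mulVec_le (M : Matrix (Fin k) (Fin k) ℝ) (u : Fin k → ℝ) :
    |u ⬝ᵥ (M *ᵥ u)| ≤ ‖M‖ * (u ⬝ᵥ u) := by
  rcases abs_cases (u ⬝ᵥ (M *ᵥ u)) with ⟨h, _⟩ | ⟨h, _⟩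
  · rw [h]; exact dotProduct_mulVec_le_opNorm M u
  · rw [h]
    have : u ⬝ᵥ ((-M) *ᵥ u) ≤ ‖(-M)‖ * (u ⬝ᵥ u) := dotProduct_mulVec_le_opNorm (-M) u
    simpa [Matrix.neg_mulVec, norm_neg] using this



lemma bddAbove_logNorm_set (A : Matrix (Fin n) (Fin n) ℝ) :
    BddAbove {r : ℝ | ∃ x : EuclideanSpace ℂ (Fin n), ‖x‖ = 1 ∧
      r = (dotProduct (star (x : Fin n → ℂ)) ((A.map Complex.ofReal).mulVec x)).re} := by
  refine ⟨‖A.map Complex.ofReal‖, ?_⟩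
  rintro r ⟨x, hx, rfl⟩
  set M := A.map Complex.ofReal
  have h1 : (dotProduct (star (x : Fin n → ℂ)) (M.mulVec x))
      = (inner ℂ x ((WithLp.equiv 2 _).symm (M *ᵥ x)) : ℂ) := by
    simp only [PiLp.inner_apply, RCLike.inner_apply, dotProduct]
    exact Finset.sum_congr rfl fun i _ => mul_comm _ _
  have h2 : ‖(inner ℂ x ((WithLp.equiv 2 _).symm (M *ᵥ x)) : ℂ)‖
      ≤ ‖x‖ * ‖((WithLp.equiv 2 _).symm (M *ᵥ x) : EuclideanSpace ℂ (Fin n))‖ :=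
    norm_inner_le_norm _ _
  have h3 : ‖((WithLp.equiv 2 _).symm (M *ᵥ x) : EuclideanSpace ℂ (Fin n))‖ ≤ ‖M‖ * ‖x‖ :=
    M.l2_opNorm_mulVec x
  have h4 := (Complex.re_le_norm ((dotProduct (star (x : Fin n → ℂ)) (M.mulVec x))))
  calc (dotProduct (star (x : Fin n → ℂ)) (M.mulVec x)).re
      ≤ ‖(dotProduct (star (x : Fin n → ℂ)) (M.mulVec x))‖ := h4
    _ = ‖(inner ℂ x ((WithLp.equiv 2 _).symm (M *ᵥ x)) : ℂ)‖ := by rw [h1]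
    _ ≤ ‖x‖ * (‖M‖ * ‖x‖) := le_trans h2 (mul_le_mul_of_nonneg_left h3 (norm_nonneg x))
    _ ≤ ‖M‖ := by rw [hx]; simp

lemma dotProduct_mulVec_le_logNorm (A : Matrix (Fin n) (Fin n) ℝ) (w : Fin n → ℝ) :
    w ⬝ᵥ (A *ᵥ w) ≤ logNorm A * (w ⬝ᵥ w) := by
  -- first the unit-vector case
  have unit : ∀ u : Fin n → ℝ, u ⬝ᵥ u = 1 → u ⬝ᵥ (A *ᵥ u) ≤ logNorm A := by
    intro u hu
    apply le_csSup (bddAbove_logNorm_set A)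
    refine ⟨(WithLp.equiv 2 _).symm (fun i => (u i : ℂ)), ?_, ?_⟩
    · have : ‖((WithLp.equiv 2 _).symm (fun i => (u i : ℂ)) : EuclideanSpace ℂ (Fin n))‖
          = Real.sqrt (∑ i, ‖(u i : ℂ)‖ ^ 2) := by
        rw [EuclideanSpace.norm_eq]
        rfl
      rw [this]
      have : (∑ i, ‖(u i : ℂ)‖ ^ 2) = u ⬝ᵥ u := by
        simp [Complex.norm_real, dotProduct, sq_abs, sq]
      rw [this, hu, Real.sqrt_one]
    · have : (dotProduct (fun i => (u i : ℂ))
          ((A.map Complex.ofReal).mulVec (fun i => (u i : ℂ)))) = ((u ⬝ᵥ (A *ᵥ u) : ℝ) : ℂ) := by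
        simp only [dotProduct, Matrix.mulVec, Matrix.map_apply]
        push_cast
        rfl
      show u ⬝ᵥ A *ᵥ u
        = (dotProduct (star (fun i => (u i : ℂ)))
            ((A.map Complex.ofReal).mulVec (fun i => (u i : ℂ)))).re
      rw [show (star (fun i => (u i : ℂ)) : Fin n → ℂ) = fun i => (u i : ℂ) by
        funext i; simp]
      rw [this, Complex.ofReal_re]
  rcases eq_or_lt_of_le (dot_self_nonneg w) with h0 | hpos
  · have hw : w = 0 := by
      funext i
      have := Finset.sum_eq_zero_iff_of_nonneg (fun i _ => mul_self_nonneg (w i)) |>.1 h0.symm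
      have h6 := this i (Finset.mem_univ i)
      have h5 : w i = 0 := by nlinarith [h6]
      simpa using h5
    simp [hw]
  · set c := Real.sqrt (w ⬝ᵥ w) with hc
    have hcpos : 0 < c := Real.sqrt_pos.2 hpos
    have hc2 : c ^ 2 = w ⬝ᵥ w := Real.sq_sqrt (le_of_lt hpos)
    set u := c⁻¹ • w with hu
    have huu : u ⬝ᵥ u = 1 := by
      simp [hu, smul_dotProduct, dotProduct_smul, smul_eq_mul]
      field_simp
      rw [← hc2]
    have hAu : u ⬝ᵥ (A *ᵥ u) = (c⁻¹)^2 * (w ⬝ᵥ (A *ᵥ w)) := by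
      simp [hu, smul_dotProduct, dotProduct_smul, Matrix.mulVec_smul, smul_eq_mul]
      ring
    have := unit u huu
    rw [hAu] at this
    have h2 : w ⬝ᵥ (A *ᵥ w) ≤ logNorm A * c ^ 2 := by
      have hcc : (0:ℝ) < (c⁻¹)^2 := by positivity
      calc w ⬝ᵥ (A *ᵥ w) = ((c⁻¹)^2 * (w ⬝ᵥ (A *ᵥ w))) * c^2 := by field_simp
        _ ≤ logNorm A * c ^ 2 := by nlinarith [sq_nonneg c]
    rwa [hc2] at h2


/-- entry extraction as a linear map -/
def entryLM (i : Fin a) (j : Fin b) : Matrix (Fin a) (Fin b) ℝ →ₗ[ℝ] ℝ where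
  toFun M := M i j
  map_add' _ _ := rfl
  map_smul' _ _ := rfl

lemma hasDerivAt_entry {Y : ℝ → Matrix (Fin a) (Fin b) ℝ} {D : Matrix (Fin a) (Fin b) ℝ} {r : ℝ}
    (h : HasDerivAt Y D r) (i : Fin a) (j : Fin b) :
    HasDerivAt (fun t => Y t i j) (D i j) r := by
  have hc : Continuous (entryLM (a := a) (b := b) i j) :=
    LinearMap.continuous_of_finiteDimensional _
  have := (ContinuousLinearMap.hasFDerivAt
    (f := ⟨entryLM i j, hc⟩) (x := Y r)).comp_hasDerivAt r h
  exact this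

lemma hasDerivAt_transposeM {Y : ℝ → Matrix (Fin a) (Fin b) ℝ} {D : Matrix (Fin a) (Fin b) ℝ}
    {r : ℝ} (h : HasDerivAt Y D r) :
    HasDerivAt (fun t => (Y t)ᵀ) Dᵀ r := by
  have hc : Continuous (Matrix.transposeLinearEquiv (Fin a) (Fin b) ℝ ℝ : 
      Matrix (Fin a) (Fin b) ℝ →ₗ[ℝ] Matrix (Fin b) (Fin a) ℝ) :=
    LinearMap.continuous_of_finiteDimensional _
  have := (ContinuousLinearMap.hasFDerivAt
    (f := ⟨(Matrix.transposeLinearEquiv (Fin a) (Fin b) ℝ ℝ : _ →ₗ[ℝ] _), by exact hc⟩)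
    (x := Y r)).comp_hasDerivAt r h
  exact this

lemma hasDerivAt_dot {v w : ℝ → Fin k → ℝ} {v' w' : Fin k → ℝ} {r : ℝ}
    (hv : ∀ i, HasDerivAt (fun t => v t i) (v' i) r)
    (hw : ∀ i, HasDerivAt (fun t => w t i) (w' i) r) :
    HasDerivAt (fun t => v t ⬝ᵥ w t) (v' ⬝ᵥ w r + v r ⬝ᵥ w') r := by
  have : HasDerivAt (fun t => ∑ i, v t i * w t i)
      (∑ i, (v' i * w r i + v r i * w' i)) r :=
    HasDerivAt.fun_sum (fun i _ => (hv i).mul (hw i))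
  convert this using 1
  all_goals simp [dotProduct, Finset.sum_add_distrib]

lemma hasDerivAt_mulVec {M : ℝ → Matrix (Fin k) (Fin k) ℝ} {M' : Matrix (Fin k) (Fin k) ℝ}
    {v : ℝ → Fin k → ℝ} {v' : Fin k → ℝ} {r : ℝ}
    (hM : HasDerivAt M M' r) (hv : ∀ i, HasDerivAt (fun t => v t i) (v' i) r) :
    ∀ i, HasDerivAt (fun t => (M t *ᵥ v t) i) ((M' *ᵥ v r + M r *ᵥ v') i) r := by
  intro i
  have : HasDerivAt (fun t => ∑ j, M t i j * v t j)
      (∑ j, (M' i j * v r j + M r i j * v' j)) r :=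
    HasDerivAt.fun_sum (fun j _ => (hasDerivAt_entry hM i j).mul (hv j))
  convert this using 1
  all_goals simp [Matrix.mulVec, dotProduct, Finset.sum_add_distrib]

lemma hasDerivAt_expFlow (M : Matrix (Fin k) (Fin k) ℝ) (s r : ℝ) :
    HasDerivAt (fun t => NormedSpace.exp ((s - t) • M))
      (-(M * NormedSpace.exp ((s - r) • M))) r := by
  have h1 : HasDerivAt (fun u : ℝ => NormedSpace.exp (u • M))
      (M * NormedSpace.exp ((s - r) • M)) (s - r) := hasDerivAt_exp_smul_const' M (s - r)
  have h2 : HasDerivAt (fun t : ℝ => s - t) (-1) r := by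
    simpa using (hasDerivAt_id r).const_sub s
  have := h1.scomp r h2
  rw [neg_one_smul] at this
  exact this

lemma hasDerivAt_expFwd (M : Matrix (Fin k) (Fin k) ℝ) (r : ℝ) :
    HasDerivAt (fun t : ℝ => NormedSpace.exp (t • M))
      (M * NormedSpace.exp (r • M)) r := hasDerivAt_exp_smul_const' M r

/-- comparison of two functions via derivative inequality -/
lemma sub_le_sub_of_deriv_le {f g f' g' : ℝ → ℝ} {α β : ℝ} (hαβ : α ≤ β)
    (hf : ∀ r ∈ Set.Icc α β, HasDerivAt f (f' r) r)
    (hg : ∀ r ∈ Set.Icc α β, HasDerivAt g (g' r) r)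
    (hle : ∀ r ∈ Set.Icc α β, f' r ≤ g' r) :
    f β - f α ≤ g β - g α := by
  set h := fun t => f t - g t with hh
  have hd : ∀ r ∈ Set.Icc α β, HasDerivAt h (f' r - g' r) r :=
    fun r hr => (hf r hr).sub (hg r hr)
  have hanti : AntitoneOn h (Set.Icc α β) := by
    apply antitoneOn_of_deriv_nonpos (convex_Icc α β)
    · exact fun r hr => ((hd r hr).continuousAt).continuousWithinAt
    · intro r hr
      exact ((hd r (interior_subset hr)).differentiableAt).differentiableWithinAt
    · intro r hr
      rw [(hd r (interior_subset hr)).deriv]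
      exact sub_nonpos.2 (hle r (interior_subset hr))
  have := hanti (Set.left_mem_Icc.2 hαβ) (Set.right_mem_Icc.2 hαβ) hαβ
  simp only [hh] at this
  linarith

/-- norm-squared growth bound for the flow of `y' = M y` -/
lemma expFlow_dot_le {M : Matrix (Fin k) (Fin k) ℝ} {c : ℝ}
    (hq : ∀ u : Fin k → ℝ, u ⬝ᵥ (M *ᵥ u) ≤ c * (u ⬝ᵥ u)) (x : Fin k → ℝ) {τ : ℝ} (hτ : 0 ≤ τ) :
    (NormedSpace.exp (τ • M) *ᵥ x) ⬝ᵥ (NormedSpace.exp (τ • M) *ᵥ x)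
      ≤ Real.exp (2 * c * τ) * (x ⬝ᵥ x) := by
  set y := fun t : ℝ => NormedSpace.exp (t • M) *ᵥ x with hy
  set u := fun t : ℝ => y t ⬝ᵥ y t with hu
  have hyd : ∀ t : ℝ, ∀ i, HasDerivAt (fun r => y r i) ((M *ᵥ y t) i) t := by
    intro t i
    have h0 : ∀ i, HasDerivAt (fun _ : ℝ => x i) 0 t := fun i => hasDerivAt_const t (x i)
    have := hasDerivAt_mulVec (M := fun t => NormedSpace.exp (t • M))
      (hasDerivAt_expFwd M t) h0 i
    simpa [show (fun _ : Fin k => (0:ℝ)) = (0 : Fin k → ℝ) from rfl, Matrix.mulVec_zero,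
      ← Matrix.mulVec_mulVec] using this
  have hud : ∀ t : ℝ, HasDerivAt u (2 * (y t ⬝ᵥ (M *ᵥ y t))) t := by
    intro t
    have := hasDerivAt_dot (hyd t) (hyd t)
    convert this using 1
    rw [dotProduct_comm]
    ring
  -- compare w = u t * exp (-(2c) t) decreasing
  have hw : ∀ t ∈ Set.Icc 0 τ, HasDerivAt (fun t => u t * Real.exp (-(2*c) * t))
      (2 * (y t ⬝ᵥ (M *ᵥ y t)) * Real.exp (-(2*c) * t)
        + u t * (Real.exp (-(2*c) * t) * -(2*c))) t := by
    intro t _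
    have he : HasDerivAt (fun t : ℝ => Real.exp (-(2*c) * t))
        (Real.exp (-(2*c) * t) * -(2*c)) t := by
      have h1 : HasDerivAt (fun t : ℝ => -(2*c) * t) (-(2*c)) t := by
        simpa using (hasDerivAt_id t).const_mul (-(2*c))
      exact h1.exp
    exact (hud t).mul he
  have key : u τ * Real.exp (-(2*c) * τ) - u 0 * Real.exp (-(2*c) * 0) ≤ 0 - 0 := by
    apply sub_le_sub_of_deriv_le hτ hw (fun r _ => hasDerivAt_const r 0)
    intro r _
    have h1 : y r ⬝ᵥ (M *ᵥ y r) ≤ c * (y r ⬝ᵥ y r) := hq (y r)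
    have h2 : (0:ℝ) < Real.exp (-(2*c) * r) := Real.exp_pos _
    have : 2 * (y r ⬝ᵥ (M *ᵥ y r)) * Real.exp (-(2*c) * r)
        ≤ 2 * (c * (y r ⬝ᵥ y r)) * Real.exp (-(2*c) * r) := by nlinarith
    calc 2 * (y r ⬝ᵥ (M *ᵥ y r)) * Real.exp (-(2*c) * r)
          + u r * (Real.exp (-(2*c) * r) * -(2*c))
        ≤ 2 * (c * (y r ⬝ᵥ y r)) * Real.exp (-(2*c) * r)
          + u r * (Real.exp (-(2*c) * r) * -(2*c)) := by linarith
      _ = 0 := by simp only [hu]; ring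
  have hu0 : u 0 = x ⬝ᵥ x := by
    simp [hu, hy, zero_smul, NormedSpace.exp_zero, Matrix.one_mulVec]
  rw [hu0] at key
  have hkey : u τ * Real.exp (-(2*c) * τ) ≤ x ⬝ᵥ x := by
    have : Real.exp (-(2*c) * 0) = 1 := by norm_num
    rw [this] at key; linarith
  have hepos : (0:ℝ) < Real.exp (-(2*c) * τ) := Real.exp_pos _
  have : u τ ≤ (x ⬝ᵥ x) / Real.exp (-(2*c) * τ) := by
    rw [le_div_iff₀ hepos]; exact hkey
  calc u τ ≤ (x ⬝ᵥ x) / Real.exp (-(2*c) * τ) := this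
    _ = Real.exp (2 * c * τ) * (x ⬝ᵥ x) := by
        rw [div_eq_iff (ne_of_gt hepos), mul_right_comm, ← Real.exp_add]
        have h9 : 2*c*τ + -(2*c)*τ = 0 := by ring
        rw [h9, Real.exp_zero, one_mul]


lemma norm_transpose_real (M : Matrix (Fin a) (Fin b) ℝ) : ‖Mᵀ‖ = ‖M‖ := by
  rw [← Matrix.conjTranspose_eq_transpose_of_trivial]
  exact M.l2_opNorm_conjTranspose

lemma norm_one_le_matrix : ‖(1 : Matrix (Fin m) (Fin m) ℝ)‖ ≤ 1 := by
  rw [Matrix.cstar_norm_def, _root_.map_one]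
  exact ContinuousLinearMap.norm_id_le

lemma norm_V_le_one {n : ℕ} {V : Matrix (Fin n) (Fin m) ℝ} (hV : Vᵀ * V = 1) : ‖V‖ ≤ 1 := by
  have h1 : ‖Vᴴ * V‖ = ‖V‖ * ‖V‖ := V.l2_opNorm_conjTranspose_mul_self
  rw [Matrix.conjTranspose_eq_transpose_of_trivial, hV] at h1
  have h2 := norm_one_le_matrix (m := m)
  nlinarith [norm_nonneg V]

lemma norm_mul_self_transpose (B : Matrix (Fin a) (Fin b) ℝ) : ‖B * Bᵀ‖ = ‖B‖ * ‖B‖ := by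
  have h1 : ‖(Bᵀ)ᴴ * Bᵀ‖ = ‖Bᵀ‖ * ‖Bᵀ‖ := (Bᵀ).l2_opNorm_conjTranspose_mul_self
  rw [Matrix.conjTranspose_eq_transpose_of_trivial, Matrix.transpose_transpose] at h1
  rw [h1, norm_transpose_real]


lemma phi1_summable (z : ℝ) : Summable (fun k : ℕ => z ^ k / (Nat.factorial (k + 1) : ℝ)) := by
  apply Summable.of_norm
  refine Summable.of_nonneg_of_le (fun k => norm_nonneg _) ?_
    (Real.summable_pow_div_factorial |z|)
  intro k
  rw [Real.norm_eq_abs, abs_div, abs_pow, Nat.abs_cast]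
  apply div_le_div_of_nonneg_left
  · positivity
  · exact_mod_cast Nat.factorial_pos k
  · exact_mod_cast Nat.factorial_le (Nat.le_succ k)

lemma phi1_zero : phi1 0 = 1 := by
  unfold phi1
  rw [tsum_eq_single 0]
  · norm_num
  · intro k hk
    rw [zero_pow hk]
    simp

lemma phi1_eq_of_ne {z : ℝ} (hz : z ≠ 0) : phi1 z = (Real.exp z - 1) / z := by
  have hsum := phi1_summable z
  have hexp : Real.exp z = ∑' n : ℕ, z ^ n / (Nat.factorial n : ℝ) := by
    rw [Real.exp_eq_exp_ℝ, NormedSpace.exp_eq_tsum_div]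
  have hshift : (∑' n : ℕ, z ^ n / (Nat.factorial n : ℝ))
      = 1 + ∑' k : ℕ, z ^ (k + 1) / (Nat.factorial (k + 1) : ℝ) := by
    rw [Summable.tsum_eq_zero_add (Real.summable_pow_div_factorial z)]
    norm_num
  have hmul : z * phi1 z = ∑' k : ℕ, z ^ (k + 1) / (Nat.factorial (k + 1) : ℝ) := by
    unfold phi1
    rw [← tsum_mul_left]
    apply tsum_congr
    intro k
    rw [pow_succ]
    field_simp
  have : z * phi1 z = Real.exp z - 1 := by
    rw [hmul, hexp, hshift]; ring
  field_simp
  linarith [this]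


lemma l2_opNorm_le_of {M : Matrix (Fin a) (Fin b) ℝ} {c : ℝ} (hc : 0 ≤ c)
    (h : ∀ x : EuclideanSpace ℝ (Fin b),
      ‖((WithLp.equiv 2 _).symm (M *ᵥ x) : EuclideanSpace ℝ (Fin a))‖ ≤ c * ‖x‖) :
    ‖M‖ ≤ c := by
  rw [Matrix.l2_opNorm_def]
  exact ContinuousLinearMap.opNorm_le_bound _ hc h

lemma psd_form_nonneg {M : Matrix (Fin m) (Fin m) ℝ} (hM : M.PosSemidef) (u : Fin m → ℝ) :
    0 ≤ u ⬝ᵥ (M *ᵥ u) := by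
  have := hM.dotProduct_mulVec_nonneg u
  simpa using this

lemma psd_self_mul_transpose (B : Matrix (Fin a) (Fin b) ℝ) : (B * Bᵀ).PosSemidef := by
  have := Matrix.posSemidef_self_mul_conjTranspose B
  rwa [Matrix.conjTranspose_eq_transpose_of_trivial] at this

lemma dot_transpose_mul (B : Matrix (Fin m) (Fin m) ℝ) (u : Fin m → ℝ) :
    u ⬝ᵥ ((Bᵀ * B) *ᵥ u) = (B *ᵥ u) ⬝ᵥ (B *ᵥ u) := by
  rw [← Matrix.mulVec_mulVec, Matrix.dotProduct_mulVec, Matrix.vecMul_transpose]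

lemma norm_sq_eq_dot' (x : EuclideanSpace ℝ (Fin m)) :
    ‖x‖ ^ 2 = (x : Fin m → ℝ) ⬝ᵥ (x : Fin m → ℝ) := by
  rw [← real_inner_self_eq_norm_sq]
  exact inner_eq_dot x x

lemma norm_le_of_form_le {M : Matrix (Fin m) (Fin m) ℝ} (hM : M.PosSemidef) {c : ℝ} (hc : 0 ≤ c)
    (h : ∀ u : Fin m → ℝ, u ⬝ᵥ (M *ᵥ u) ≤ c * (u ⬝ᵥ u)) : ‖M‖ ≤ c := by
  obtain ⟨B, hB⟩ : ∃ B : Matrix (Fin m) (Fin m) ℝ, M = Bᴴ * B := by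
    open scoped MatrixOrder in
    obtain ⟨B, hB⟩ := CStarAlgebra.nonneg_iff_eq_star_mul_self.mp hM.nonneg
    exact ⟨B, hB⟩
  rw [Matrix.conjTranspose_eq_transpose_of_trivial] at hB
  have hBle : ‖B‖ ≤ Real.sqrt c := by
    apply l2_opNorm_le_of (Real.sqrt_nonneg c)
    intro x
    have h1 : ‖((WithLp.equiv 2 _).symm (B *ᵥ x) : EuclideanSpace ℝ (Fin m))‖ ^ 2
        = (B *ᵥ x) ⬝ᵥ (B *ᵥ x) := norm_sq_eq_dot' _
    have h2 : (B *ᵥ x) ⬝ᵥ (B *ᵥ x) = (x : Fin m → ℝ) ⬝ᵥ (M *ᵥ x) := by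
      rw [hB]; exact (dot_transpose_mul B x).symm
    have h3 : (x : Fin m → ℝ) ⬝ᵥ (M *ᵥ x) ≤ c * ‖x‖ ^ 2 := by
      rw [norm_sq_eq_dot']; exact h x
    have h4 : ‖((WithLp.equiv 2 _).symm (B *ᵥ x) : EuclideanSpace ℝ (Fin m))‖ ^ 2
        ≤ (Real.sqrt c * ‖x‖) ^ 2 := by
      rw [h1, h2]
      calc (x : Fin m → ℝ) ⬝ᵥ (M *ᵥ x) ≤ c * ‖x‖ ^ 2 := h3
        _ = (Real.sqrt c * ‖x‖) ^ 2 := by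
            rw [mul_pow, Real.sq_sqrt hc]
    have h5 : (0:ℝ) ≤ Real.sqrt c * ‖x‖ := by positivity
    nlinarith [norm_nonneg ((WithLp.equiv 2 _).symm (B *ᵥ x) : EuclideanSpace ℝ (Fin m))]
  calc ‖M‖ = ‖Bᵀ * B‖ := by rw [hB]
    _ ≤ ‖Bᵀ‖ * ‖B‖ := Matrix.l2_opNorm_mul _ _
    _ ≤ Real.sqrt c * Real.sqrt c := by
        have : ‖Bᵀ‖ = ‖B‖ := by
          rw [← Matrix.conjTranspose_eq_transpose_of_trivial]
          exact B.l2_opNorm_conjTranspose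
        rw [this]
        exact mul_le_mul hBle hBle (norm_nonneg _) (Real.sqrt_nonneg c)
    _ = c := Real.mul_self_sqrt hc
theorem Y_symm (T : ℝ) (hT : 0 ≤ T) (H Sk Qk : Matrix (Fin m) (Fin m) ℝ)
    (hSksym : Skᵀ = Sk) (hQksym : Qkᵀ = Qk) (Y : ℝ → Matrix (Fin m) (Fin m) ℝ)
    (hY : ∀ t ∈ Set.Icc (0:ℝ) T,
      HasDerivAt Y (H * Y t + Y t * Hᵀ + Qk - Y t * Sk * Y t) t)
    (hY0sym : (Y 0)ᵀ = Y 0) : ∀ t ∈ Set.Icc (0:ℝ) T, (Y t)ᵀ = Y t := by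
  have hcont : ContinuousOn Y (Set.Icc 0 T) :=
    fun r hr => ((hY r hr).continuousAt).continuousWithinAt
  obtain ⟨MY, hMY⟩ := (isCompact_Icc (a := (0:ℝ)) (b := T)).exists_bound_of_continuousOn hcont
  set D := fun t => H * Y t + Y t * Hᵀ + Qk - Y t * Sk * Y t with hD
  set W := fun t => Y t - (Y t)ᵀ with hW
  set K := 2*‖H‖ + 2*‖Sk‖*MY with hK
  have hWd : ∀ t ∈ Set.Icc (0:ℝ) T, HasDerivAt W (D t - (D t)ᵀ) t :=
    fun t ht => (hY t ht).sub (hasDerivAt_transposeM (hY t ht))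
  have halg : ∀ t ∈ Set.Icc (0:ℝ) T,
      D t - (D t)ᵀ = H * W t + W t * Hᵀ - (Y t * Sk * W t + W t * Sk * (Y t)ᵀ) := by
    intro t _
    simp only [hD, hW, Matrix.transpose_sub, Matrix.transpose_add, Matrix.transpose_mul,
      Matrix.transpose_transpose, hSksym, hQksym]
    noncomm_ring
  have hbound : ∀ t ∈ Set.Ico (0:ℝ) T, ‖D t - (D t)ᵀ‖ ≤ K * ‖W t‖ + 0 := by
    intro t ht
    have ht' : t ∈ Set.Icc (0:ℝ) T := Set.Ico_subset_Icc_self ht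
    rw [halg t ht']
    have hYt := hMY t ht'
    have hYtT : ‖(Y t)ᵀ‖ ≤ MY := by rw [norm_transpose_real]; exact hYt
    have h1 : ‖H * W t‖ ≤ ‖H‖ * ‖W t‖ := Matrix.l2_opNorm_mul _ _
    have h2 : ‖W t * Hᵀ‖ ≤ ‖W t‖ * ‖H‖ := by
      calc ‖W t * Hᵀ‖ ≤ ‖W t‖ * ‖Hᵀ‖ := Matrix.l2_opNorm_mul _ _
        _ = ‖W t‖ * ‖H‖ := by rw [norm_transpose_real]
    have h3 : ‖Y t * Sk * W t‖ ≤ MY * ‖Sk‖ * ‖W t‖ := by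
      calc ‖Y t * Sk * W t‖ ≤ ‖Y t * Sk‖ * ‖W t‖ := Matrix.l2_opNorm_mul _ _
        _ ≤ (‖Y t‖ * ‖Sk‖) * ‖W t‖ := by
            have := Matrix.l2_opNorm_mul (Y t) Sk
            exact mul_le_mul_of_nonneg_right this (norm_nonneg _)
        _ ≤ MY * ‖Sk‖ * ‖W t‖ := by gcongr
    have h4 : ‖W t * Sk * (Y t)ᵀ‖ ≤ ‖W t‖ * ‖Sk‖ * MY := by
      calc ‖W t * Sk * (Y t)ᵀ‖ ≤ ‖W t * Sk‖ * ‖(Y t)ᵀ‖ := Matrix.l2_opNorm_mul _ _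
        _ ≤ (‖W t‖ * ‖Sk‖) * ‖(Y t)ᵀ‖ := by
            have := Matrix.l2_opNorm_mul (W t) Sk
            exact mul_le_mul_of_nonneg_right this (norm_nonneg _)
        _ ≤ ‖W t‖ * ‖Sk‖ * MY := by gcongr
    calc ‖H * W t + W t * Hᵀ - (Y t * Sk * W t + W t * Sk * (Y t)ᵀ)‖
        ≤ ‖H * W t + W t * Hᵀ‖ + ‖Y t * Sk * W t + W t * Sk * (Y t)ᵀ‖ := norm_sub_le _ _
      _ ≤ (‖H * W t‖ + ‖W t * Hᵀ‖) + (‖Y t * Sk * W t‖ + ‖W t * Sk * (Y t)ᵀ‖) :=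
          add_le_add (norm_add_le _ _) (norm_add_le _ _)
      _ ≤ K * ‖W t‖ + 0 := by rw [hK]; nlinarith [norm_nonneg (W t)]
  have hgron := norm_le_gronwallBound_of_norm_deriv_right_le
    (f := W) (f' := fun t => D t - (D t)ᵀ) (δ := 0) (K := K) (ε := 0) (a := 0) (b := T)
    (fun r hr => ((hWd r hr).continuousAt).continuousWithinAt)
    (fun r hr => ((hWd r (Set.Ico_subset_Icc_self hr)).hasDerivWithinAt))
    (by simp [hW, hY0sym]) hbound
  intro t ht
  have := hgron t ht
  rw [gronwallBound_ε0] at this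
  simp only [zero_mul] at this
  have hW0 : W t = 0 := by
    have : ‖W t‖ ≤ 0 := this
    simpa [norm_le_zero_iff] using this
  have : Y t - (Y t)ᵀ = 0 := hW0
  have := sub_eq_zero.mp this
  exact this.symm
section PSD
variable {m : ℕ}

lemma formE_nonneg_of_unit {M : Matrix (Fin m) (Fin m) ℝ}
    (h : ∀ x : EuclideanSpace ℝ (Fin m), ‖x‖ = 1 → 0 ≤ (x : Fin m → ℝ) ⬝ᵥ (M *ᵥ x)) :
    ∀ z : Fin m → ℝ, 0 ≤ z ⬝ᵥ (M *ᵥ z) := by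
  intro z
  rcases eq_or_lt_of_le (dot_self_nonneg z) with h0 | hpos
  · have hz : z = 0 := by
      funext i
      have h7 := Finset.sum_eq_zero_iff_of_nonneg (fun i _ => mul_self_nonneg (z i)) |>.1 h0.symm
      have h6 := h7 i (Finset.mem_univ i)
      have h5 : z i = 0 := by nlinarith
      simpa using h5
    simp [hz]
  · set c := Real.sqrt (z ⬝ᵥ z) with hc
    have hcpos : 0 < c := Real.sqrt_pos.2 hpos
    have hc2 : c ^ 2 = z ⬝ᵥ z := Real.sq_sqrt (le_of_lt hpos)
    set u : Fin m → ℝ := c⁻¹ • z with hu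
    have huu : u ⬝ᵥ u = 1 := by
      simp only [hu, smul_dotProduct, dotProduct_smul, smul_eq_mul]
      field_simp
      rw [← hc2]
    have hnorm : ‖((WithLp.equiv 2 _).symm u : EuclideanSpace ℝ (Fin m))‖ = 1 := by
      have h8 : ‖((WithLp.equiv 2 _).symm u : EuclideanSpace ℝ (Fin m))‖ ^ 2 = u ⬝ᵥ u :=
        norm_sq_eq_dot' _
      rw [huu] at h8
      nlinarith [norm_nonneg ((WithLp.equiv 2 _).symm u : EuclideanSpace ℝ (Fin m))]
    have h9 := h ((WithLp.equiv 2 _).symm u) hnorm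
    have h10 : (0:ℝ) ≤ u ⬝ᵥ (M *ᵥ u) := h9
    have h11 : u ⬝ᵥ (M *ᵥ u) = (c⁻¹)^2 * (z ⬝ᵥ (M *ᵥ z)) := by
      simp only [hu, smul_dotProduct, dotProduct_smul, Matrix.mulVec_smul,
        smul_eq_mul]
      ring
    rw [h11] at h10
    have hcc : (0:ℝ) < (c⁻¹)^2 := by positivity
    nlinarith

lemma dot_one_of_unit {x : EuclideanSpace ℝ (Fin m)} (hx : ‖x‖ = 1) :
    (x : Fin m → ℝ) ⬝ᵥ (x : Fin m → ℝ) = 1 := by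
  have := norm_sq_eq_dot' x
  rw [hx] at this
  simpa using this.symm

set_option maxHeartbeats 1000000 in
theorem Y_psd (T : ℝ) (hT : 0 ≤ T) (H Sk Qk : Matrix (Fin m) (Fin m) ℝ)
    (hSk : Sk.PosSemidef) (hQk : Qk.PosSemidef) (Y : ℝ → Matrix (Fin m) (Fin m) ℝ)
    (hY : ∀ t ∈ Set.Icc (0:ℝ) T,
      HasDerivAt Y (H * Y t + Y t * Hᵀ + Qk - Y t * Sk * Y t) t)
    (hY0 : (Y 0).PosSemidef) (hsym : ∀ t ∈ Set.Icc (0:ℝ) T, (Y t)ᵀ = Y t) :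
    ∀ t ∈ Set.Icc (0:ℝ) T, ∀ u : Fin m → ℝ, 0 ≤ u ⬝ᵥ (Y t *ᵥ u) := by
  set K := 2*‖H‖ + ‖Sk‖ + 1 with hKdef
  have hK1 : 1 ≤ K := by
    have := norm_nonneg H; have := norm_nonneg Sk; simp only [hKdef]; linarith
  have hcont : ContinuousOn Y (Set.Icc 0 T) :=
    fun r hr => ((hY r hr).continuousAt).continuousWithinAt
  -- the derivative of the quadratic form along a fixed vector
  have hψd : ∀ (z : Fin m → ℝ) (ε : ℝ), ∀ r ∈ Set.Icc (0:ℝ) T,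
      HasDerivAt (fun τ => z ⬝ᵥ (Y τ *ᵥ z) + ε * Real.exp (K*τ))
        (z ⬝ᵥ ((H * Y r + Y r * Hᵀ + Qk - Y r * Sk * Y r) *ᵥ z) + ε * (Real.exp (K*r) * K)) r := by
    intro z ε r hr
    have hconst : ∀ i, HasDerivAt (fun _ : ℝ => z i) ((0 : Fin m → ℝ) i) r :=
      fun i => hasDerivAt_const r (z i)
    have hdot := hasDerivAt_dot (v := fun _ => z) (w := fun τ => Y τ *ᵥ z)
      hconst (hasDerivAt_mulVec (hY r hr) hconst)
    have hexp : HasDerivAt (fun τ => ε * Real.exp (K*τ)) (ε * (Real.exp (K*r) * K)) r := by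
      have h1 : HasDerivAt (fun τ : ℝ => K * τ) K r := by
        simpa using (hasDerivAt_id r).const_mul K
      exact (h1.exp).const_mul ε
    have := hdot.add hexp
    refine this.congr_deriv ?_
    simp [Matrix.mulVec_zero]
  -- ε-level positivity
  have main : ∀ ε : ℝ, 0 < ε → ε ≤ Real.exp (-(K*T)) → ∀ s ∈ Set.Icc (0:ℝ) T,
      ∀ x : EuclideanSpace ℝ (Fin m), ‖x‖ = 1 →
        0 < (x : Fin m → ℝ) ⬝ᵥ (Y s *ᵥ x) + ε * Real.exp (K*s) := by
    intro ε hε hεT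
    by_contra hcon
    push_neg at hcon
    obtain ⟨s₀, hs₀, x₀, hx₀, hform₀⟩ := hcon
    set f : ℝ × EuclideanSpace ℝ (Fin m) → ℝ :=
      fun p => (p.2 : Fin m → ℝ) ⬝ᵥ (Y p.1 *ᵥ p.2) + ε * Real.exp (K*p.1) with hf
    have hprojc : ∀ i : Fin m, Continuous (fun x : EuclideanSpace ℝ (Fin m) => x i) := by
      intro i
      exact (continuous_apply i).comp (PiLp.continuous_ofLp 2 (fun _ : Fin m => ℝ))
    have hentryc : ∀ i j : Fin m, ContinuousOn (fun s => Y s i j) (Set.Icc (0:ℝ) T) := by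
      intro i j
      have hc : Continuous (entryLM (a := m) (b := m) i j) :=
        LinearMap.continuous_of_finiteDimensional _
      exact hc.comp_continuousOn hcont
    have hfc : ContinuousOn f ((Set.Icc (0:ℝ) T) ×ˢ (Set.univ : Set (EuclideanSpace ℝ (Fin m)))) := by
      apply ContinuousOn.add
      · have heq : (fun p : ℝ × EuclideanSpace ℝ (Fin m) => (p.2 : Fin m → ℝ) ⬝ᵥ (Y p.1 *ᵥ p.2))
            = fun p => ∑ i, ∑ j, p.2 i * (Y p.1 i j * p.2 j) := by
          funext p
          simp [dotProduct, Matrix.mulVec, Finset.mul_sum]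
        rw [heq]
        apply continuousOn_finset_sum
        intro i _
        apply continuousOn_finset_sum
        intro j _
        apply ContinuousOn.mul
        · exact ((hprojc i).comp continuous_snd).continuousOn
        · apply ContinuousOn.mul
          · exact (hentryc i j).comp continuous_fst.continuousOn (fun p hp => hp.1)
          · exact ((hprojc j).comp continuous_snd).continuousOn
      · apply Continuous.continuousOn
        exact continuous_const.mul ((Real.continuous_exp).comp (continuous_const.mul continuous_fst))
    set A2 := (Set.Icc (0:ℝ) T) ×ˢ (Metric.sphere (0 : EuclideanSpace ℝ (Fin m)) 1) with hA2
    have hA2c : IsCompact A2 := isCompact_Icc.prod (isCompact_sphere 0 1)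
    set Kc := A2 ∩ f ⁻¹' (Set.Iic (0:ℝ)) with hKc
    have hKcclosed : IsClosed Kc := by
      apply ContinuousOn.preimage_isClosed_of_isClosed
        (hfc.mono ?_) hA2c.isClosed isClosed_Iic
      intro p hp
      exact ⟨hp.1, Set.mem_univ _⟩
    have hKcCompact : IsCompact Kc := hA2c.of_isClosed_subset hKcclosed Set.inter_subset_left
    set E := Prod.fst '' Kc with hE
    have hEcompact : IsCompact E := hKcCompact.image continuous_fst
    have hEne : E.Nonempty := by
      refine ⟨s₀, ⟨(s₀, x₀), ⟨⟨hs₀, ?_⟩, ?_⟩, rfl⟩⟩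
      · simpa [mem_sphere_zero_iff_norm] using hx₀
      · exact hform₀
    set s' := sInf E with hs'def
    have hs'E : s' ∈ E := hEcompact.sInf_mem hEne
    obtain ⟨p, hpKc, hp1⟩ := hs'E
    set x' : EuclideanSpace ℝ (Fin m) := p.2 with hx'def
    set xv : Fin m → ℝ := (x' : Fin m → ℝ) with hxvdef
    have hs'Icc : s' ∈ Set.Icc (0:ℝ) T := by rw [← hp1]; exact hpKc.1.1
    have hx'sph : ‖x'‖ = 1 := by
      have := hpKc.1.2
      simpa [mem_sphere_zero_iff_norm] using this
    have hfs' : (x' : Fin m → ℝ) ⬝ᵥ (Y s' *ᵥ x') + ε * Real.exp (K*s') ≤ 0 := by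
      have h2 := hpKc.2
      simp only [Set.mem_preimage, Set.mem_Iic, hf] at h2
      rw [← hp1]
      exact h2
    have hBelow : ∀ r, 0 ≤ r → r < s' → ∀ z : EuclideanSpace ℝ (Fin m), ‖z‖ = 1 →
        0 < (z : Fin m → ℝ) ⬝ᵥ (Y r *ᵥ z) + ε * Real.exp (K*r) := by
      intro r hr0 hrs z hz
      by_contra hc
      push_neg at hc
      have hrE : r ∈ E := by
        refine ⟨(r, z), ⟨⟨⟨hr0, le_trans (le_of_lt hrs) hs'Icc.2⟩, ?_⟩, hc⟩, rfl⟩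
        simpa [mem_sphere_zero_iff_norm] using hz
      have := csInf_le hEcompact.bddBelow hrE
      rw [← hs'def] at this
      linarith
    have hs'pos : 0 < s' := by
      rcases eq_or_lt_of_le hs'Icc.1 with h0 | h
      · exfalso
        have h1 : 0 ≤ (x' : Fin m → ℝ) ⬝ᵥ (Y 0 *ᵥ x') := psd_form_nonneg hY0 x'
        rw [← h0] at hfs'
        have h2 : Real.exp (K*0) = 1 := by norm_num
        rw [h2] at hfs'
        linarith
      · exact h
    -- limit from the left: the shifted form is nonneg at s'
    have hlimit : ∀ z : EuclideanSpace ℝ (Fin m), ‖z‖ = 1 →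
        0 ≤ (z : Fin m → ℝ) ⬝ᵥ (Y s' *ᵥ z) + ε * Real.exp (K*s') := by
      intro z hz
      set g := fun τ => (z : Fin m → ℝ) ⬝ᵥ (Y τ *ᵥ z) + ε * Real.exp (K*τ) with hg
      have hgc : ContinuousAt g s' := (hψd z ε s' hs'Icc).continuousAt
      have htd : Filter.Tendsto g (nhdsWithin s' (Set.Iio s')) (nhds (g s')) :=
        hgc.continuousWithinAt.tendsto
      refine ge_of_tendsto htd ?_
      filter_upwards [Ioo_mem_nhdsLT_of_mem (Set.mem_Ioc.mpr ⟨hs'pos, le_refl s'⟩)] with r hr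
      exact le_of_lt (hBelow r (le_of_lt hr.1) hr.2 z hz)
    set aε := ε * Real.exp (K*s') with haε
    have haεpos : 0 < aε := mul_pos hε (Real.exp_pos _)
    have haεle1 : aε ≤ 1 := by
      have h1 : aε ≤ Real.exp (-(K*T)) * Real.exp (K*s') := by
        apply mul_le_mul_of_nonneg_right hεT (le_of_lt (Real.exp_pos _))
      rw [← Real.exp_add] at h1
      have h2 : -(K*T) + K*s' ≤ 0 := by
        have h3 : K*s' ≤ K*T := by
          apply mul_le_mul_of_nonneg_left hs'Icc.2 (by linarith)
        linarith
      calc aε ≤ Real.exp (-(K*T) + K*s') := h1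
        _ ≤ 1 := Real.exp_le_one_iff.mpr h2
    set Me := Y s' + aε • (1 : Matrix (Fin m) (Fin m) ℝ) with hMe
    have hform_eq : ∀ z : Fin m → ℝ, z ⬝ᵥ (Me *ᵥ z) = z ⬝ᵥ (Y s' *ᵥ z) + aε * (z ⬝ᵥ z) := by
      intro z
      rw [hMe, Matrix.add_mulVec, Matrix.smul_mulVec, Matrix.one_mulVec, dotProduct_add,
        dotProduct_smul]
      simp [smul_eq_mul]
    have hMepsd : Me.PosSemidef := by
      refine Matrix.PosSemidef.of_dotProduct_mulVec_nonneg ?_ ?_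
      · show Meᴴ = Me
        rw [Matrix.conjTranspose_eq_transpose_of_trivial, hMe, Matrix.transpose_add,
          Matrix.transpose_smul, Matrix.transpose_one, hsym s' hs'Icc]
      · intro z
        show 0 ≤ dotProduct (star z) (Me *ᵥ z)
        rw [show (star z : Fin m → ℝ) = z by funext i; simp]
        apply formE_nonneg_of_unit
        intro x hx
        rw [hform_eq, dot_one_of_unit hx, mul_one]
        exact hlimit x hx
    have hMex' : Me *ᵥ xv = 0 := by
      apply (hMepsd.dotProduct_mulVec_zero_iff x').mp
      rw [show (star xv) = xv by funext i; simp]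
      apply le_antisymm
      · rw [hform_eq, dot_one_of_unit hx'sph, mul_one]
        exact hfs'
      · have := hMepsd.dotProduct_mulVec_nonneg x'
        rwa [show (star xv) = xv by funext i; simp] at this
    have hYx' : Y s' *ᵥ xv = (-aε) • xv := by
      have h1 : Y s' *ᵥ xv + aε • xv = 0 := by
        have := hMex'
        rwa [hMe, Matrix.add_mulVec, Matrix.smul_mulVec, Matrix.one_mulVec] at this
      have := eq_neg_of_add_eq_zero_left h1
      rw [this, neg_smul]
    -- derivative at s' is positive
    set D := H * Y s' + Y s' * Hᵀ + Qk - Y s' * Sk * Y s' with hD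
    have hsym' : (Y s')ᵀ = Y s' := hsym s' hs'Icc
    have symdot : ∀ w : Fin m → ℝ, xv ⬝ᵥ (Y s' *ᵥ w)
        = (Y s' *ᵥ xv) ⬝ᵥ w := by
      intro w
      rw [Matrix.dotProduct_mulVec]
      congr 1
      rw [← Matrix.mulVec_transpose, hsym']
    have hx'dot1 : xv ⬝ᵥ xv = 1 := dot_one_of_unit hx'sph
    have hT1 : xv ⬝ᵥ ((H * Y s') *ᵥ xv) ≥ -(aε * ‖H‖) := by
      rw [← Matrix.mulVec_mulVec, hYx', Matrix.mulVec_smul, dotProduct_smul, smul_eq_mul]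
      have h1 := abs_dotProduct_mulVec_le H xv
      rw [hx'dot1, mul_one] at h1
      have h2 := abs_le.mp h1
      nlinarith
    have hT2 : xv ⬝ᵥ ((Y s' * Hᵀ) *ᵥ xv) ≥ -(aε * ‖H‖) := by
      rw [← Matrix.mulVec_mulVec, symdot, hYx', smul_dotProduct, smul_eq_mul]
      have h1 := abs_dotProduct_mulVec_le Hᵀ xv
      rw [hx'dot1, mul_one, norm_transpose_real] at h1
      have h2 := abs_le.mp h1
      nlinarith
    have hT3 : 0 ≤ xv ⬝ᵥ (Qk *ᵥ xv) := psd_form_nonneg hQk xv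
    have hT4 : xv ⬝ᵥ ((Y s' * Sk * Y s') *ᵥ xv) ≤ aε * ‖Sk‖ := by
      have h1 : (Y s' * Sk * Y s') *ᵥ xv
          = Y s' *ᵥ (Sk *ᵥ (Y s' *ᵥ xv)) := by
        rw [Matrix.mulVec_mulVec, Matrix.mulVec_mulVec]
      rw [h1, symdot, hYx']
      rw [Matrix.mulVec_smul, smul_dotProduct, dotProduct_smul]
      simp only [smul_eq_mul]
      have h2 : 0 ≤ xv ⬝ᵥ (Sk *ᵥ xv) := psd_form_nonneg hSk x'
      have h3 := dotProduct_mulVec_le_opNorm Sk xv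
      rw [hx'dot1, mul_one] at h3
      have e1 : aε*aε*(xv ⬝ᵥ (Sk *ᵥ xv)) ≤ aε*aε*‖Sk‖ :=
        mul_le_mul_of_nonneg_left h3 (mul_nonneg haεpos.le haεpos.le)
      have e2 : aε*aε*‖Sk‖ ≤ aε*‖Sk‖ := by
        have h6 : aε*aε ≤ aε := by nlinarith
        exact mul_le_mul_of_nonneg_right h6 (norm_nonneg Sk)
      have heq : -aε * (-aε * (xv ⬝ᵥ (Sk *ᵥ xv))) = aε*aε*(xv ⬝ᵥ (Sk *ᵥ xv)) := by ring
      rw [heq]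
      exact e1.trans e2
    have hdval : xv ⬝ᵥ (D *ᵥ xv)
        = xv ⬝ᵥ ((H * Y s') *ᵥ xv) + xv ⬝ᵥ ((Y s' * Hᵀ) *ᵥ xv)
          + xv ⬝ᵥ (Qk *ᵥ xv) - xv ⬝ᵥ ((Y s' * Sk * Y s') *ᵥ xv) := by
      rw [hD, Matrix.sub_mulVec, Matrix.add_mulVec, Matrix.add_mulVec, dotProduct_sub,
        dotProduct_add, dotProduct_add]
    have hdpos : 0 < xv ⬝ᵥ (D *ᵥ xv) + ε * (Real.exp (K*s') * K) := by
      have h5 : ε * (Real.exp (K*s') * K) = aε * K := by rw [haε]; ring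
      rw [hdval, h5]
      have hnH := norm_nonneg H
      have hnS := norm_nonneg Sk
      nlinarith [hT1, hT2, hT3, hT4, haεpos, haεle1, hK1]
    -- but the derivative must be ≤ 0 at the first touching point
    set ψ := fun τ => xv ⬝ᵥ (Y τ *ᵥ xv) + ε * Real.exp (K*τ) with hψ
    have hψs'd : HasDerivAt ψ
        (xv ⬝ᵥ (D *ᵥ xv) + ε * (Real.exp (K*s') * K)) s' := by
      have := hψd x' ε s' hs'Icc
      rw [hD]
      exact this
    have htend := hasDerivAt_iff_tendsto_slope.mp hψs'd
    have htend' : Filter.Tendsto (slope ψ s') (nhdsWithin s' (Set.Iio s'))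
        (nhds (xv ⬝ᵥ (D *ᵥ xv) + ε * (Real.exp (K*s') * K))) := by
      apply htend.mono_left
      apply nhdsWithin_mono
      intro r hr
      exact ne_of_lt hr
    have hslope : ∀ᶠ r in nhdsWithin s' (Set.Iio s'), slope ψ s' r ≤ 0 := by
      filter_upwards [Ioo_mem_nhdsLT_of_mem (Set.mem_Ioc.mpr ⟨hs'pos, le_refl s'⟩)] with r hr
      rw [slope_def_field]
      apply div_nonpos_of_nonneg_of_nonpos
      · have h1 := hBelow r (le_of_lt hr.1) hr.2 x' hx'sph
        have h2 : ψ r > 0 := h1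
        have h3 : ψ s' ≤ 0 := hfs'
        simp only [hψ] at h2 h3 ⊢
        linarith
      · linarith [hr.2]
    have hd0 := le_of_tendsto htend' hslope
    linarith
  -- pass to the ε → 0 limit
  intro t ht
  apply formE_nonneg_of_unit
  intro x hx
  by_contra hneg
  push_neg at hneg
  set c := (x : Fin m → ℝ) ⬝ᵥ (Y t *ᵥ x) with hcdef
  have hc0 : c < 0 := hneg
  set ε := min (Real.exp (-(K*T))) (-c / (2 * Real.exp (K*t))) with hε
  have hεpos : 0 < ε := by
    apply lt_min (Real.exp_pos _)
    apply div_pos (by linarith) (by positivity)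
  have h1 := main ε hεpos (min_le_left _ _) t ht x hx
  have h2 : ε * Real.exp (K*t) ≤ -c / 2 := by
    have h3 : ε ≤ -c / (2 * Real.exp (K*t)) := min_le_right _ _
    have h4 : (0:ℝ) < Real.exp (K*t) := Real.exp_pos _
    calc ε * Real.exp (K*t) ≤ (-c / (2 * Real.exp (K*t))) * Real.exp (K*t) :=
          mul_le_mul_of_nonneg_right h3 (le_of_lt h4)
      _ = -c / 2 := by field_simp
  rw [← hcdef] at h1
  linarith

end PSD
section QB
variable {m : ℕ}

set_option maxHeartbeats 1000000 in
theorem Y_form_bound (T : ℝ) (hT : 0 ≤ T) (H Sk Qk : Matrix (Fin m) (Fin m) ℝ) (μ : ℝ)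
    (hSk : Sk.PosSemidef) (hμ : ∀ u : Fin m → ℝ, u ⬝ᵥ (H *ᵥ u) ≤ μ * (u ⬝ᵥ u))
    (Y : ℝ → Matrix (Fin m) (Fin m) ℝ)
    (hY : ∀ t ∈ Set.Icc (0:ℝ) T,
      HasDerivAt Y (H * Y t + Y t * Hᵀ + Qk - Y t * Sk * Y t) t)
    (hsym : ∀ t ∈ Set.Icc (0:ℝ) T, (Y t)ᵀ = Y t) :
    ∀ s ∈ Set.Icc (0:ℝ) T, ∀ u : Fin m → ℝ,
      u ⬝ᵥ (Y s *ᵥ u) ≤ (Real.exp (2*μ*s) * ‖Y 0‖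
        + ‖Qk‖ * (if μ = 0 then s else (Real.exp (2*μ*s) - 1)/(2*μ))) * (u ⬝ᵥ u) := by
  intro s hs u
  have hqT : ∀ w : Fin m → ℝ, w ⬝ᵥ (Hᵀ *ᵥ w) ≤ μ * (w ⬝ᵥ w) := by
    intro w
    have h1 : w ⬝ᵥ (Hᵀ *ᵥ w) = w ⬝ᵥ (H *ᵥ w) := by
      rw [Matrix.mulVec_transpose, dotProduct_comm, ← Matrix.dotProduct_mulVec]
    rw [h1]; exact hμ w
  set v := fun r : ℝ => NormedSpace.exp ((s - r) • Hᵀ) *ᵥ u with hv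
  have hvd : ∀ r : ℝ, ∀ i, HasDerivAt (fun t => v t i) ((-(Hᵀ *ᵥ v r)) i) r := by
    intro r i
    have hconst : ∀ i, HasDerivAt (fun _ : ℝ => u i) ((0 : Fin m → ℝ) i) r :=
      fun i => hasDerivAt_const r (u i)
    have := hasDerivAt_mulVec (hasDerivAt_expFlow Hᵀ s r) hconst i
    have heq : (-(Hᵀ * NormedSpace.exp ((s - r) • Hᵀ))) *ᵥ u
        + NormedSpace.exp ((s - r) • Hᵀ) *ᵥ (0 : Fin m → ℝ) = -(Hᵀ *ᵥ v r) := by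
      rw [Matrix.mulVec_zero, add_zero, Matrix.neg_mulVec, ← Matrix.mulVec_mulVec, hv]
    rw [heq] at this
    exact this
  have hvb : ∀ r ∈ Set.Icc (0:ℝ) s, v r ⬝ᵥ v r ≤ Real.exp (2*μ*(s-r)) * (u ⬝ᵥ u) := by
    intro r hr
    exact expFlow_dot_le hqT u (by linarith [hr.2])
  set φ := fun r => v r ⬝ᵥ (Y r *ᵥ v r) with hφ
  have hsub : Set.Icc (0:ℝ) s ⊆ Set.Icc (0:ℝ) T := Set.Icc_subset_Icc (le_refl 0) hs.2
  have hφd : ∀ r ∈ Set.Icc (0:ℝ) s,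
      HasDerivAt φ (v r ⬝ᵥ ((Qk - Y r * Sk * Y r) *ᵥ v r)) r := by
    intro r hr
    have hr' : r ∈ Set.Icc (0:ℝ) T := hsub hr
    have hd := hasDerivAt_dot (hvd r) (hasDerivAt_mulVec (hY r hr') (hvd r))
    convert hd using 1
    set w := v r with hw
    set Yr := Y r with hYr
    have A1 : (-(Hᵀ *ᵥ w)) ⬝ᵥ (Yr *ᵥ w) = -(w ⬝ᵥ ((H * Yr) *ᵥ w)) := by
      rw [neg_dotProduct]
      congr 1
      rw [Matrix.mulVec_transpose, ← Matrix.mulVec_mulVec, ← Matrix.dotProduct_mulVec]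
    have A2 : w ⬝ᵥ (Yr *ᵥ (-(Hᵀ *ᵥ w))) = -(w ⬝ᵥ ((Yr * Hᵀ) *ᵥ w)) := by
      rw [Matrix.mulVec_neg, dotProduct_neg, ← Matrix.mulVec_mulVec]
    have A3 : w ⬝ᵥ ((H * Yr + Yr * Hᵀ + Qk - Yr * Sk * Yr) *ᵥ w)
        = w ⬝ᵥ ((H * Yr) *ᵥ w) + w ⬝ᵥ ((Yr * Hᵀ) *ᵥ w) + w ⬝ᵥ (Qk *ᵥ w)
          - w ⬝ᵥ ((Yr * Sk * Yr) *ᵥ w) := by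
      rw [Matrix.sub_mulVec, Matrix.add_mulVec, Matrix.add_mulVec, dotProduct_sub,
        dotProduct_add, dotProduct_add]
    have A4 : w ⬝ᵥ ((Qk - Yr * Sk * Yr) *ᵥ w)
        = w ⬝ᵥ (Qk *ᵥ w) - w ⬝ᵥ ((Yr * Sk * Yr) *ᵥ w) := by
      rw [Matrix.sub_mulVec, dotProduct_sub]
    rw [A4, dotProduct_add, A1, A2, A3]
    ring
  have hquadpos : ∀ r ∈ Set.Icc (0:ℝ) s, 0 ≤ v r ⬝ᵥ ((Y r * Sk * Y r) *ᵥ v r) := by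
    intro r hr
    have hsymr : (Y r)ᵀ = Y r := hsym r (hsub hr)
    have h1 : ∀ w0 : Fin m → ℝ, (Y r * Sk * Y r) *ᵥ w0 = Y r *ᵥ (Sk *ᵥ (Y r *ᵥ w0)) := by
      intro w0
      rw [Matrix.mulVec_mulVec, Matrix.mulVec_mulVec]
    have h2 : v r ⬝ᵥ (Y r *ᵥ (Sk *ᵥ (Y r *ᵥ v r)))
        = (Y r *ᵥ v r) ⬝ᵥ (Sk *ᵥ (Y r *ᵥ v r)) := by
      rw [Matrix.dotProduct_mulVec]
      congr 1
      rw [← Matrix.mulVec_transpose, hsymr]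
    rw [h1 (v r), h2]
    exact psd_form_nonneg hSk _
  have hφ'le : ∀ r ∈ Set.Icc (0:ℝ) s,
      v r ⬝ᵥ ((Qk - Y r * Sk * Y r) *ᵥ v r)
        ≤ ‖Qk‖ * (Real.exp (2*μ*(s-r)) * (u ⬝ᵥ u)) := by
    intro r hr
    have h1 : v r ⬝ᵥ ((Qk - Y r * Sk * Y r) *ᵥ v r)
        = v r ⬝ᵥ (Qk *ᵥ v r) - v r ⬝ᵥ ((Y r * Sk * Y r) *ᵥ v r) := by
      rw [Matrix.sub_mulVec, dotProduct_sub]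
    rw [h1]
    have h2 := hquadpos r hr
    have h3 : v r ⬝ᵥ (Qk *ᵥ v r) ≤ ‖Qk‖ * (v r ⬝ᵥ v r) := dotProduct_mulVec_le_opNorm Qk (v r)
    have h4 := hvb r hr
    have h5 : ‖Qk‖ * (v r ⬝ᵥ v r) ≤ ‖Qk‖ * (Real.exp (2*μ*(s-r)) * (u ⬝ᵥ u)) :=
      mul_le_mul_of_nonneg_left h4 (norm_nonneg Qk)
    linarith
  -- antiderivative of the bound
  set G := fun r : ℝ => ‖Qk‖ * (u ⬝ᵥ u) *
    (if μ = 0 then r else -Real.exp (2*μ*(s-r))/(2*μ)) with hG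
  have hGd : ∀ r ∈ Set.Icc (0:ℝ) s,
      HasDerivAt G (‖Qk‖ * (Real.exp (2*μ*(s-r)) * (u ⬝ᵥ u))) r := by
    intro r _
    rcases eq_or_ne μ 0 with h0 | h0
    · have : G = fun r => ‖Qk‖ * (u ⬝ᵥ u) * r := by
        funext r; rw [hG]; simp [h0]
      rw [this]
      have := (hasDerivAt_id r).const_mul (‖Qk‖ * (u ⬝ᵥ u))
      refine this.congr_deriv ?_
      simp [h0]
    · have hinner : HasDerivAt (fun r : ℝ => 2*μ*(s-r)) (-(2*μ)) r := by
        have := ((hasDerivAt_const r s).sub (hasDerivAt_id r)).const_mul (2*μ)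
        simpa using this
      have hexp := hinner.exp
      have := ((hexp.div_const (2*μ)).neg).const_mul (‖Qk‖ * (u ⬝ᵥ u))
      have hGeq : G = fun r => ‖Qk‖ * (u ⬝ᵥ u) * -(Real.exp (2*μ*(s-r))/(2*μ)) := by
        funext r; rw [hG]; simp [h0]; ring
      rw [hGeq]
      refine this.congr_deriv ?_
      field_simp
  have hcomp := sub_le_sub_of_deriv_le hs.1 hφd hGd hφ'le
  have hφs : φ s = u ⬝ᵥ (Y s *ᵥ u) := by
    have hvs : v s = u := by
      rw [hv]
      simp only [sub_self, zero_smul, NormedSpace.exp_zero, Matrix.one_mulVec]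
    simp only [hφ, hvs]
  have hφ0 : φ 0 ≤ Real.exp (2*μ*s) * ‖Y 0‖ * (u ⬝ᵥ u) := by
    have h1 : φ 0 ≤ ‖Y 0‖ * (v 0 ⬝ᵥ v 0) := dotProduct_mulVec_le_opNorm (Y 0) (v 0)
    have h2 := hvb 0 (Set.left_mem_Icc.2 hs.1)
    have h3 : ‖Y 0‖ * (v 0 ⬝ᵥ v 0) ≤ ‖Y 0‖ * (Real.exp (2*μ*(s-0)) * (u ⬝ᵥ u)) :=
      mul_le_mul_of_nonneg_left h2 (norm_nonneg _)
    calc φ 0 ≤ ‖Y 0‖ * (v 0 ⬝ᵥ v 0) := h1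
      _ ≤ ‖Y 0‖ * (Real.exp (2*μ*(s-0)) * (u ⬝ᵥ u)) := h3
      _ = Real.exp (2*μ*s) * ‖Y 0‖ * (u ⬝ᵥ u) := by rw [sub_zero]; ring
  have hGdiff : G s - G 0 = ‖Qk‖ * (if μ = 0 then s else (Real.exp (2*μ*s) - 1)/(2*μ)) *
      (u ⬝ᵥ u) := by
    rcases eq_or_ne μ 0 with h0 | h0
    · simp [hG, h0]
      ring
    · simp only [hG, if_neg h0]
      rw [sub_self, sub_zero, show (2:ℝ)*μ*0 = 0 by ring, Real.exp_zero]
      field_simp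
      ring
  have := hcomp
  rw [hφs] at this
  calc u ⬝ᵥ (Y s *ᵥ u) ≤ φ 0 + (G s - G 0) := by linarith
    _ ≤ Real.exp (2*μ*s) * ‖Y 0‖ * (u ⬝ᵥ u)
        + ‖Qk‖ * (if μ = 0 then s else (Real.exp (2*μ*s) - 1)/(2*μ)) * (u ⬝ᵥ u) := by
        rw [hGdiff]; linarith
    _ = (Real.exp (2*μ*s) * ‖Y 0‖
        + ‖Qk‖ * (if μ = 0 then s else (Real.exp (2*μ*s) - 1)/(2*μ))) * (u ⬝ᵥ u) := by ring

end QB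

set_option maxHeartbeats 1000000 in
/-- Bound for the maximum of the numerical solution of the projected DRE. -/
theorem projected_dre_max_norm_bound {n p q m : ℕ} (T : ℝ) (hT : 0 ≤ T)
    (A S : Matrix (Fin n) (Fin n) ℝ) (hS : S.PosSemidef)
    (Z : Matrix (Fin n) (Fin p) ℝ) (C : Matrix (Fin n) (Fin q) ℝ)
    (V : Matrix (Fin n) (Fin m) ℝ) (hV : Vᵀ * V = 1)
    (Y : ℝ → Matrix (Fin m) (Fin m) ℝ)
    (hY : ∀ t ∈ Set.Icc (0:ℝ) T,
      HasDerivAt Y ((Vᵀ * A * V) * Y t + Y t * (Vᵀ * A * V)ᵀ + (Vᵀ * C) * (Vᵀ * C)ᵀ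
        - Y t * (Vᵀ * S * V) * Y t) t)
    (hY0 : Y 0 = (Vᵀ * Z) * (Vᵀ * Z)ᵀ) :
    ∀ t ∈ Set.Icc (0:ℝ) T, ∀ s ∈ Set.Icc (0:ℝ) t,
      ‖V * Y s * Vᵀ‖ ≤ max 1 (Real.exp (2 * t * logNorm A)) * ‖Z * Zᵀ‖
        + t * max 1 (phi1 (2 * t * logNorm A)) * ‖C * Cᵀ‖ := by
  intro t ht s hst
  set μ := logNorm A with hμdef
  set H := Vᵀ * A * V with hH
  set Sk := Vᵀ * S * V with hSk'
  set Qk := (Vᵀ * C) * (Vᵀ * C)ᵀ with hQk'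
  have hsT : s ∈ Set.Icc (0:ℝ) T := ⟨hst.1, le_trans hst.2 ht.2⟩
  -- the ODE in abstract form; note (Vᵀ*A*V)ᵀ = Hᵀ
  have hY' : ∀ r ∈ Set.Icc (0:ℝ) T,
      HasDerivAt Y (H * Y r + Y r * Hᵀ + Qk - Y r * Sk * Y r) r := hY
  have hSkpsd : Sk.PosSemidef := by
    have := hS.mul_mul_conjTranspose_same Vᵀ
    simpa [Matrix.conjTranspose_eq_transpose_of_trivial, Matrix.transpose_transpose] using this
  have hSksym : Skᵀ = Sk := by
    have h1 : Skᴴ = Sk := hSkpsd.1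
    rwa [Matrix.conjTranspose_eq_transpose_of_trivial] at h1
  have hQkpsd : Qk.PosSemidef := psd_self_mul_transpose (Vᵀ * C)
  have hQksym : Qkᵀ = Qk := by
    rw [hQk', Matrix.transpose_mul, Matrix.transpose_transpose]
  have hY0psd : (Y 0).PosSemidef := by rw [hY0]; exact psd_self_mul_transpose _
  have hY0sym : (Y 0)ᵀ = Y 0 := by
    rw [hY0, Matrix.transpose_mul, Matrix.transpose_transpose]
  have hsym := Y_symm T hT H Sk Qk hSksym hQksym Y hY' hY0sym
  have hpsd := Y_psd T hT H Sk Qk hSkpsd hQkpsd Y hY' hY0psd hsym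
  have hμq : ∀ u : Fin m → ℝ, u ⬝ᵥ (H *ᵥ u) ≤ μ * (u ⬝ᵥ u) := by
    intro u
    have hsplit : ∀ (M : Matrix (Fin n) (Fin n) ℝ) (w : Fin n → ℝ),
        u ⬝ᵥ ((Vᵀ * M * V) *ᵥ u) = (V *ᵥ u) ⬝ᵥ (M *ᵥ (V *ᵥ u)) := by
      intro M w
      have h1 : (Vᵀ * M * V) *ᵥ u = Vᵀ *ᵥ (M *ᵥ (V *ᵥ u)) := by
        rw [Matrix.mulVec_mulVec, Matrix.mulVec_mulVec]
      rw [h1, Matrix.dotProduct_mulVec, Matrix.vecMul_transpose]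
    have h2 : (V *ᵥ u) ⬝ᵥ (V *ᵥ u) = u ⬝ᵥ u := by
      have h3 : u ⬝ᵥ ((Vᵀ * V) *ᵥ u) = (V *ᵥ u) ⬝ᵥ (V *ᵥ u) := by
        have h4 : (Vᵀ * V) *ᵥ u = Vᵀ *ᵥ (V *ᵥ u) := by rw [Matrix.mulVec_mulVec]
        rw [h4, Matrix.dotProduct_mulVec, Matrix.vecMul_transpose]
      rw [hV, Matrix.one_mulVec] at h3
      exact h3.symm
    rw [hH, hsplit A 0, ← h2]
    exact dotProduct_mulVec_le_logNorm A (V *ᵥ u)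
  have hforms := Y_form_bound T hT H Sk Qk μ hSkpsd hμq Y hY' hsym s hsT
  set I2s := (if μ = 0 then s else (Real.exp (2*μ*s) - 1)/(2*μ)) with hI2s
  have hI2nonneg : 0 ≤ I2s := by
    rw [hI2s]
    rcases eq_or_ne μ 0 with h0 | h0
    · simp only [if_pos h0]; exact hst.1
    · simp only [if_neg h0]
      rcases lt_or_gt_of_ne h0 with hneg | hpos
      · rw [div_nonneg_iff]
        right
        constructor
        · have h5 : 2*μ*s ≤ 0 := by nlinarith [hst.1]
          have h6 : Real.exp (2*μ*s) ≤ 1 := by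
            calc Real.exp (2*μ*s) ≤ Real.exp 0 := Real.exp_le_exp.mpr h5
              _ = 1 := Real.exp_zero
          linarith
        · linarith
      · apply div_nonneg
        · have h5 : 0 ≤ 2*μ*s := by nlinarith [hst.1]
          have h6 : 1 ≤ Real.exp (2*μ*s) := by
            calc (1:ℝ) = Real.exp 0 := Real.exp_zero.symm
              _ ≤ Real.exp (2*μ*s) := Real.exp_le_exp.mpr h5
          linarith
        · linarith
  set c := Real.exp (2*μ*s) * ‖Y 0‖ + ‖Qk‖ * I2s with hc
  have hcnonneg : 0 ≤ c := by
    rw [hc]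
    have h1 := Real.exp_pos (2*μ*s)
    have h2 := norm_nonneg (Y 0)
    have h3 := norm_nonneg Qk
    nlinarith
  have hYspsd : (Y s).PosSemidef := by
    refine Matrix.PosSemidef.of_dotProduct_mulVec_nonneg ?_ ?_
    · show (Y s)ᴴ = Y s
      rw [Matrix.conjTranspose_eq_transpose_of_trivial]
      exact hsym s hsT
    · intro x
      show 0 ≤ dotProduct (star x) (Y s *ᵥ x)
      rw [show (star x : Fin m → ℝ) = x by funext i; simp]
      exact hpsd s hsT x
  have hYsnorm : ‖Y s‖ ≤ c := by
    apply norm_le_of_form_le hYspsd hcnonneg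
    intro u
    have h7 := hforms u
    rw [hc]
    exact h7
  have hV1 : ‖V‖ ≤ 1 := norm_V_le_one hV
  have hVT1 : ‖Vᵀ‖ ≤ 1 := by rw [norm_transpose_real]; exact hV1
  have hVYV : ‖V * Y s * Vᵀ‖ ≤ ‖Y s‖ := by
    have h1 : ‖V * Y s * Vᵀ‖ ≤ ‖V * Y s‖ * ‖Vᵀ‖ := Matrix.l2_opNorm_mul _ _
    have h2 : ‖V * Y s‖ ≤ ‖V‖ * ‖Y s‖ := Matrix.l2_opNorm_mul _ _
    have h3 := norm_nonneg (Y s)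
    have h4 := norm_nonneg (V * Y s)
    have h5 := norm_nonneg V
    have h6 := norm_nonneg Vᵀ
    nlinarith
  have hY0n : ‖Y 0‖ ≤ ‖Z * Zᵀ‖ := by
    rw [hY0, norm_mul_self_transpose, norm_mul_self_transpose]
    have h1 : ‖Vᵀ * Z‖ ≤ ‖Vᵀ‖ * ‖Z‖ := Matrix.l2_opNorm_mul _ _
    have h2 : ‖Vᵀ * Z‖ ≤ ‖Z‖ := by nlinarith [norm_nonneg Z, norm_nonneg (Vᵀ * Z), norm_nonneg Vᵀ]
    nlinarith [norm_nonneg (Vᵀ * Z), norm_nonneg Z]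
  have hQkn : ‖Qk‖ ≤ ‖C * Cᵀ‖ := by
    rw [hQk', norm_mul_self_transpose, norm_mul_self_transpose]
    have h1 : ‖Vᵀ * C‖ ≤ ‖Vᵀ‖ * ‖C‖ := Matrix.l2_opNorm_mul _ _
    have h2 : ‖Vᵀ * C‖ ≤ ‖C‖ := by nlinarith [norm_nonneg C, norm_nonneg (Vᵀ * C), norm_nonneg Vᵀ]
    nlinarith [norm_nonneg (Vᵀ * C), norm_nonneg C]
  have hE : Real.exp (2*μ*s) ≤ max 1 (Real.exp (2 * t * μ)) := by
    rcases le_or_gt 0 μ with hm | hm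
    · have h1 : 2*μ*s ≤ 2*t*μ := by nlinarith [hst.2]
      exact le_trans (Real.exp_le_exp.mpr h1) (le_max_right _ _)
    · have h1 : 2*μ*s ≤ 0 := by nlinarith [hst.1]
      have h6 : Real.exp (2*μ*s) ≤ 1 := by
        calc Real.exp (2*μ*s) ≤ Real.exp 0 := Real.exp_le_exp.mpr h1
          _ = 1 := Real.exp_zero
      exact le_trans h6 (le_max_left _ _)
  have hEnn : (0:ℝ) ≤ max 1 (Real.exp (2 * t * μ)) := le_trans zero_le_one (le_max_left _ _)
  have hFnn : (0:ℝ) ≤ max 1 (phi1 (2 * t * μ)) := le_trans zero_le_one (le_max_left _ _)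
  have hI2le : I2s ≤ t * max 1 (phi1 (2 * t * μ)) := by
    have htnn : 0 ≤ t := ht.1
    rw [hI2s]
    rcases eq_or_ne μ 0 with h0 | h0
    · simp only [if_pos h0]
      calc s ≤ t := hst.2
        _ = t * 1 := by ring
        _ ≤ t * max 1 (phi1 (2 * t * μ)) :=
            mul_le_mul_of_nonneg_left (le_max_left _ _) htnn
    · simp only [if_neg h0]
      have hmono : (Real.exp (2*μ*s) - 1)/(2*μ) ≤ (Real.exp (2*μ*t) - 1)/(2*μ) := by
        rcases lt_or_gt_of_ne h0 with hneg | hpos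
        · rw [div_le_div_right_of_neg (by linarith : 2*μ < 0)]
          have h8 : 2*μ*t ≤ 2*μ*s := by nlinarith [hst.2]
          have h9 := Real.exp_le_exp.mpr h8
          linarith
        · rw [div_le_div_iff₀ (by linarith : (0:ℝ) < 2*μ) (by linarith : (0:ℝ) < 2*μ)]
          have h8 : 2*μ*s ≤ 2*μ*t := by nlinarith [hst.2]
          have h9 := Real.exp_le_exp.mpr h8
          nlinarith
      refine le_trans hmono ?_
      rcases eq_or_lt_of_le htnn with ht0 | htpos
      · rw [← ht0]
        rw [show 2*μ*(0:ℝ) = 0 by ring, Real.exp_zero]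
        simp
      · have htμ : 2*t*μ ≠ 0 := by
          intro hcontra
          rcases mul_eq_zero.mp hcontra with h | h
          · rcases mul_eq_zero.mp h with h | h
            · norm_num at h
            · linarith
          · exact h0 h
        have hphi : phi1 (2*t*μ) = (Real.exp (2*t*μ) - 1)/(2*t*μ) := phi1_eq_of_ne htμ
        have hkey : t * phi1 (2*t*μ) = (Real.exp (2*μ*t) - 1)/(2*μ) := by
          rw [hphi, show 2*t*μ = 2*μ*t by ring]
          field_simp
        calc (Real.exp (2*μ*t) - 1)/(2*μ) = t * phi1 (2*t*μ) := hkey.symm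
          _ ≤ t * max 1 (phi1 (2 * t * μ)) :=
              mul_le_mul_of_nonneg_left (le_max_right _ _) htnn
  have piece1 : Real.exp (2*μ*s) * ‖Y 0‖ ≤ max 1 (Real.exp (2 * t * μ)) * ‖Z * Zᵀ‖ :=
    mul_le_mul hE hY0n (norm_nonneg _) hEnn
  have piece2 : ‖Qk‖ * I2s ≤ ‖C * Cᵀ‖ * (t * max 1 (phi1 (2 * t * μ))) :=
    mul_le_mul hQkn hI2le hI2nonneg (norm_nonneg _)
  have hre : ‖C * Cᵀ‖ * (t * max 1 (phi1 (2 * t * μ)))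
      = t * max 1 (phi1 (2 * t * μ)) * ‖C * Cᵀ‖ := by ring
  calc ‖V * Y s * Vᵀ‖ ≤ ‖Y s‖ := hVYV
    _ ≤ c := hYsnorm
    _ = Real.exp (2*μ*s) * ‖Y 0‖ + ‖Qk‖ * I2s := hc
    _ ≤ max 1 (Real.exp (2 * t * μ)) * ‖Z * Zᵀ‖
        + t * max 1 (phi1 (2 * t * μ)) * ‖C * Cᵀ‖ := by rw [← hre]; linarith
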